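/- In a finite connected directed graded graph satisfying the local diamond-completion property (any two outgoing edges from a common vertex can be completed to a commuting square, and dually for incoming edges), there is a unique minimal vertex (vertex with no incoming edge) and a unique maximal vertex (vertex with no outgoing edge). -/

import Mathlib

/-- Joinability of everything in a connected graph with outgoing diamonds. -/
lemma joinAll {V : Type*} (E : V → V → Prop)
    (hconn : ∀ v w : V, Relation.ReflTransGen (fun a b => E a b ∨ E b a) v w)
    (hdiamondOut : ∀ v₁ v₂ v₃ : V, E v₁ v₂ → E v₁ v₃ → v₂ ≠ v₃ →
      ∃ v₄, E v₂ v₄ ∧ E v₃ v₄) :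
    ∀ v w : V, Relation.Join (Relation.ReflTransGen E) v w := by
  have hcr : ∀ a b c : V, E a b → E a c →
      ∃ d, Relation.ReflGen E b d ∧ Relation.ReflTransGen E c d := by
    intro a b c hab hac
    by_cases h : b = c
    · exact ⟨b, Relation.ReflGen.refl, h ▸ Relation.ReflTransGen.refl⟩
    · obtain ⟨d, hbd, hcd⟩ := hdiamondOut a b c hab hac h
      exact ⟨d, Relation.ReflGen.single hbd, Relation.ReflTransGen.single hcd⟩
  have heq := Relation.equivalence_join_reflTransGen hcr
  intro v w
  induction hconn v w with
  | refl => exact heq.refl v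
  | tail _ h ih =>
    refine heq.trans ih ?_
    rcases h with h | h
    · exact ⟨_, Relation.ReflTransGen.single h, Relation.ReflTransGen.refl⟩
    · exact ⟨_, Relation.ReflTransGen.refl, Relation.ReflTransGen.single h⟩

lemma sink_eq_of_reach {V : Type*} {E : V → V → Prop} {v u : V}
    (hv : ∀ v' : V, ¬ E v v') (h : Relation.ReflTransGen E v u) : v = u := by
  rcases h.cases_head with h | ⟨c, hc, _⟩
  · exact h
  · exact absurd hc (hv c)

/-- A finite connected directed graph graded by `f : V → ℕ`
(so `f v' = f v + 1` along each edge `v → v'`), satisfying the local diamond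
completion property for outgoing edges and dually for incoming edges, has a
unique minimal vertex (no incoming edge) and a unique maximal vertex (no
outgoing edge). -/
theorem stmt_1 {V : Type*} [Fintype V] [Nonempty V] (E : V → V → Prop)
    (hconn : ∀ v w : V, Relation.ReflTransGen (fun a b => E a b ∨ E b a) v w)
    (f : V → ℕ) (hgrade : ∀ v v' : V, E v v' → f v' = f v + 1)
    (hdiamondOut : ∀ v₁ v₂ v₃ : V, E v₁ v₂ → E v₁ v₃ → v₂ ≠ v₃ →
      ∃ v₄, E v₂ v₄ ∧ E v₃ v₄)
    (hdiamondIn : ∀ v₁ v₂ v₃ : V, E v₂ v₁ → E v₃ v₁ → v₂ ≠ v₃ →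
      ∃ v₄, E v₄ v₂ ∧ E v₄ v₃) :
    (∃! v : V, ∀ v' : V, ¬ E v' v) ∧ (∃! v : V, ∀ v' : V, ¬ E v v') := by
  constructor
  · -- minimal: use flipped relation
    have hjoin := joinAll (fun a b => E b a)
      (fun v w => Relation.ReflTransGen.mono (p := fun a b => E b a ∨ E a b) (fun a b h => Or.symm h) v w (hconn v w))
      (fun v₁ v₂ v₃ h₁ h₂ hne => hdiamondIn v₁ v₂ v₃ h₁ h₂ hne)
    obtain ⟨m, hm⟩ := Finite.exists_min f
    refine ⟨m, fun v' hv' => ?_, fun y hy => ?_⟩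
    · have := hgrade v' m hv'
      have := hm v'
      omega
    · obtain ⟨u, hyu, hmu⟩ := hjoin y m
      have h1 := sink_eq_of_reach (E := fun a b => E b a) hy hyu
      have h2 := sink_eq_of_reach (E := fun a b => E b a) (fun v' hv' => ?_) hmu
      · exact h1.trans h2.symm
      · have := hgrade v' m hv'
        have := hm v'
        omega
  · have hjoin := joinAll E hconn hdiamondOut
    obtain ⟨m, hm⟩ := Finite.exists_max f
    refine ⟨m, fun v' hv' => ?_, fun y hy => ?_⟩
    · have := hgrade m v' hv'
      have := hm v'
      omega
    · obtain ⟨u, hyu, hmu⟩ := hjoin y m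
      have h1 := sink_eq_of_reach hy hyu
      have h2 := sink_eq_of_reach (fun v' hv' => ?_) hmu
      · exact h1.trans h2.symm
      · have := hgrade m v' hv'
        have := hm v'
        omega
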